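/- There is no type z with Hilbert space H_z = ℂ² ⊗ ℂ² such that Δ_z = Traceless(ℂ²) ⊗ Traceless(ℂ²). In particular, the dimension equation 9 = d_y²(d_x² − 1 − a_x) + a_y(1 + a_x), arising from Δ_{x→y} = [Herm(H_y) ⊗ Δ̄_x] ⊕ [Δ_y ⊗ (L_e ⊕ Δ_x)] with constraints 0 ≤ a_x ≤ d_x² − 1, 0 ≤ a_y ≤ d_y² − 1, has no solution for (d_x, d_y) ∈ {(4,1),(2,2)} consistent with the recursive structure of types. -/

import Mathlib

open Matrix Kronecker
open scoped ComplexOrder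

/-- Types of higher-order quantum theory. The trivial type `I` is `elem 1`. -/
inductive QT where
  | elem (n : ℕ)
  | arrow (x y : QT)

/-- The index type of the Hilbert space `H_x` associated to a type `x`. -/
def Idx : QT → Type
  | .elem n => Fin n
  | .arrow x y => Idx x × Idx y

instance idxFintype : (x : QT) → Fintype (Idx x)
  | .elem n => inferInstanceAs (Fintype (Fin n))
  | .arrow x y =>
      letI := idxFintype x; letI := idxFintype y
      inferInstanceAs (Fintype (Idx x × Idx y))

instance idxDecEq : (x : QT) → DecidableEq (Idx x)
  | .elem n => inferInstanceAs (DecidableEq (Fin n))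
  | .arrow x y =>
      letI := idxDecEq x; letI := idxDecEq y
      inferInstanceAs (DecidableEq (Idx x × Idx y))

/-- Partial trace over the first tensor factor. -/
noncomputable def ptrA {ι κ : Type} [Fintype ι]
    (M : Matrix (ι × κ) (ι × κ) ℂ) : Matrix κ κ ℂ :=
  fun k l => ∑ i : ι, M (i, k) (i, l)

/-- Deterministic events of type `x`, defined recursively: for elementary types,
positive unit-trace operators; for `x → y`, positive operators `R` such that
`Tr_x[(Sᵀ ⊗ 1) R] ∈ Det y` for every `S ∈ Det x`. -/
noncomputable def Det : (x : QT) → Set (Matrix (Idx x) (Idx x) ℂ)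
  | .elem n => {R | R.PosSemidef ∧ R.trace = 1}
  | .arrow x y =>
      setOf (fun (R : Matrix (Idx x × Idx y) (Idx x × Idx y) ℂ) =>
        R.PosSemidef ∧
        ∀ S ∈ Det x, ptrA ((Sᵀ ⊗ₖ (1 : Matrix (Idx y) (Idx y) ℂ)) * R) ∈ Det y)

/-- The real subspace of Hermitian operators. -/
noncomputable def hermSub (ι : Type) [Fintype ι] [DecidableEq ι] :
    Submodule ℝ (Matrix ι ι ℂ) where
  carrier := {X | X.IsHermitian}
  add_mem' := fun ha hb => ha.add hb
  zero_mem' := Matrix.isHermitian_zero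
  smul_mem' := fun c X hX => by
    show ((c • X)ᴴ = c • X)
    rw [Matrix.conjTranspose_smul, star_trivial, hX.eq]

/-- The real subspace of traceless Hermitian operators. -/
noncomputable def tlHermSub (ι : Type) [Fintype ι] [DecidableEq ι] :
    Submodule ℝ (Matrix ι ι ℂ) where
  carrier := {X | X.IsHermitian ∧ X.trace = 0}
  add_mem' := fun ha hb => ⟨ha.1.add hb.1, by rw [trace_add, ha.2, hb.2, add_zero]⟩
  zero_mem' := ⟨Matrix.isHermitian_zero, Matrix.trace_zero ι ℂ⟩
  smul_mem' := fun c X hX =>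
    ⟨by show ((c • X)ᴴ = c • X)
        rw [Matrix.conjTranspose_smul, star_trivial, hX.1.eq],
     by rw [trace_smul, hX.2, smul_zero]⟩

/-- The Hilbert–Schmidt orthogonal complement of `S` inside `B`. -/
noncomputable def perpWithin {ι : Type} [Fintype ι] [DecidableEq ι]
    (S B : Submodule ℝ (Matrix ι ι ℂ)) : Submodule ℝ (Matrix ι ι ℂ) where
  carrier := {Z | Z ∈ B ∧ ∀ Y ∈ S, (Y * Z).trace = 0}
  add_mem' := fun ha hb =>
    ⟨B.add_mem ha.1 hb.1, fun Y hY => by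
      rw [mul_add, trace_add, ha.2 Y hY, hb.2 Y hY, add_zero]⟩
  zero_mem' := ⟨B.zero_mem, fun Y _ => by simp⟩
  smul_mem' := fun c Z hZ =>
    ⟨B.smul_mem c hZ.1, fun Y hY => by
      rw [Matrix.mul_smul, trace_smul, hZ.2 Y hY, smul_zero]⟩

/-- Tensor product of operator subspaces, spanned by Kronecker products. -/
noncomputable def tensorSub {ι κ : Type} [Fintype ι] [DecidableEq ι]
    [Fintype κ] [DecidableEq κ]
    (P : Submodule ℝ (Matrix ι ι ℂ)) (Q : Submodule ℝ (Matrix κ κ ℂ)) :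
    Submodule ℝ (Matrix (ι × κ) (ι × κ) ℂ) :=
  Submodule.span ℝ {A | ∃ X ∈ P, ∃ Y ∈ Q, A = X ⊗ₖ Y}

/-- The one-dimensional subspace `L_e` spanned by the identity. -/
noncomputable def idSub (ι : Type) [Fintype ι] [DecidableEq ι] :
    Submodule ℝ (Matrix ι ι ℂ) :=
  Submodule.span ℝ {(1 : Matrix ι ι ℂ)}

/-- The subspace `Δ_x` of traceless Hermitian operators characterizing the
deterministic events of type `x`:
`Δ_A = Traceless(H_A)` for elementary `A`, and
`Δ_{x→y} = [Herm(H_x) ⊗ Δ_y] ⊕ [Δ̄_x ⊗ Δ_y^⊥]`, where `Δ̄_x` is the complement of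
`Δ_x` inside the traceless Hermitian operators and `Δ_y^⊥` its orthogonal
complement inside the Hermitian operators. -/
noncomputable def Delta : (x : QT) → Submodule ℝ (Matrix (Idx x) (Idx x) ℂ)
  | .elem n => tlHermSub (Fin n)
  | .arrow x y =>
      (tensorSub (hermSub (Idx x)) (Delta y) ⊔
        tensorSub (perpWithin (Delta x) (tlHermSub (Idx x)))
          (perpWithin (Delta y) (hermSub (Idx y))) :
        Submodule ℝ (Matrix (Idx x × Idx y) (Idx x × Idx y) ℂ))

/-- The normalization constant `λ_x`: `λ_A = 1/d_A`, `λ_{x→y} = λ_y/(d_x λ_x)`. -/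
noncomputable def lam : QT → ℝ
  | .elem n => 1 / n
  | .arrow x y => lam y / (Fintype.card (Idx x) * lam x)


/-! ### Auxiliary machinery -/

section InnerProd
variable {ι : Type} [Fintype ι] [DecidableEq ι]

lemma trace_conjTranspose_mul_self_re' (A : Matrix ι ι ℂ) :
    ((Aᴴ * A).trace).re = ∑ j : ι, ∑ i : ι, Complex.normSq (A i j) := by
  simp only [Matrix.trace, Matrix.diag, Matrix.mul_apply, Matrix.conjTranspose_apply]
  rw [Complex.re_sum]
  refine Finset.sum_congr rfl fun j _ => ?_
  rw [Complex.re_sum]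
  refine Finset.sum_congr rfl fun i _ => ?_
  simp [Complex.normSq_apply, Complex.mul_re]

noncomputable def matCore (ι : Type) [Fintype ι] [DecidableEq ι] :
    InnerProductSpace.Core ℝ (Matrix ι ι ℂ) where
  inner A B := ((Aᴴ * B).trace).re
  conj_inner_symm A B := by
    simp only [starRingEnd_apply, star_trivial]
    have : (Bᴴ * A)ᴴ = Aᴴ * B := by simp
    rw [← this, Matrix.trace_conjTranspose]
    simp [Complex.star_def]
  re_inner_nonneg A := by
    simp only [RCLike.re_to_real]
    rw [trace_conjTranspose_mul_self_re']
    exact Finset.sum_nonneg fun j _ => Finset.sum_nonneg fun i _ => Complex.normSq_nonneg _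
  add_left A B C := by
    simp [Matrix.conjTranspose_add, Matrix.add_mul]
  smul_left A B r := by
    have : (r • A)ᴴ = r • Aᴴ := by
      rw [Matrix.conjTranspose_smul]; simp
    simp [this, Matrix.smul_mul]
  definite A h := by
    rw [trace_conjTranspose_mul_self_re'] at h
    ext i j
    have h1 : ∀ j ∈ (Finset.univ : Finset ι), ∀ i ∈ (Finset.univ : Finset ι),
        Complex.normSq (A i j) = 0 := by
      have := (Finset.sum_eq_zero_iff_of_nonneg
        (fun j _ => Finset.sum_nonneg fun i _ => Complex.normSq_nonneg _)).mp h
      intro j hj i hi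
      have := (Finset.sum_eq_zero_iff_of_nonneg
        (fun i _ => Complex.normSq_nonneg _)).mp (this j hj)
      exact this i hi
    have := h1 j (Finset.mem_univ j) i (Finset.mem_univ i)
    simpa [Complex.normSq_eq_zero] using this

noncomputable instance matNACG (ι : Type) [Fintype ι] [DecidableEq ι] :
    NormedAddCommGroup (Matrix ι ι ℂ) := (matCore ι).toNormedAddCommGroup

noncomputable instance matIPS (ι : Type) [Fintype ι] [DecidableEq ι] :
    InnerProductSpace ℝ (Matrix ι ι ℂ) := InnerProductSpace.ofCore (matCore ι).toCore

lemma matInner_def (A B : Matrix ι ι ℂ) :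
    (inner ℝ A B : ℝ) = ((Aᴴ * B).trace).re := rfl

end InnerProd

section HermRank
variable {ι : Type} [Fintype ι] [DecidableEq ι]

/-- Hermitian part projection, as an ℝ-linear map. -/
noncomputable def hermPart (ι : Type) [Fintype ι] [DecidableEq ι] :
    Matrix ι ι ℂ →ₗ[ℝ] Matrix ι ι ℂ where
  toFun A := (2:ℝ)⁻¹ • (A + Aᴴ)
  map_add' A B := by
    simp only [Matrix.conjTranspose_add, smul_add]
    module
  map_smul' c A := by
    simp only [Matrix.conjTranspose_smul, star_trivial, RingHom.id_apply, smul_add]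
    module

lemma range_hermPart : LinearMap.range (hermPart ι) = hermSub ι := by
  apply le_antisymm
  · rintro _ ⟨A, rfl⟩
    have h : (A + Aᴴ).IsHermitian := by
      unfold Matrix.IsHermitian
      rw [Matrix.conjTranspose_add, Matrix.conjTranspose_conjTranspose, add_comm]
    show ((2:ℝ)⁻¹ • (A + Aᴴ))ᴴ = (2:ℝ)⁻¹ • (A + Aᴴ)
    rw [Matrix.conjTranspose_smul, star_trivial, h]
  · intro X hX
    refine ⟨X, ?_⟩
    show (2:ℝ)⁻¹ • (X + Xᴴ) = X
    rw [show Xᴴ = X from hX, ← two_smul ℝ X, smul_smul]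
    norm_num

noncomputable def mulI (ι : Type) [Fintype ι] [DecidableEq ι] :
    Matrix ι ι ℂ ≃ₗ[ℝ] Matrix ι ι ℂ :=
  (LinearEquiv.smulOfNeZero ℂ (Matrix ι ι ℂ) Complex.I Complex.I_ne_zero).restrictScalars ℝ

lemma ker_hermPart : LinearMap.ker (hermPart ι) = (hermSub ι).map (mulI ι : Matrix ι ι ℂ →ₗ[ℝ] Matrix ι ι ℂ) := by
  apply le_antisymm
  · intro A hA
    have h0 : (2:ℝ)⁻¹ • (A + Aᴴ) = 0 := hA
    have h : Aᴴ = -A := by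
      have := congrArg (fun M => (2:ℝ) • M) h0
      simp [smul_smul] at this
      linear_combination (norm := module) this
    refine ⟨(-Complex.I) • A, ?_, ?_⟩
    · show ((-Complex.I) • A)ᴴ = (-Complex.I) • A
      rw [Matrix.conjTranspose_smul, h]
      simp
    · show Complex.I • (-Complex.I) • A = A
      rw [smul_smul]; simp
  · rintro _ ⟨B, hB, rfl⟩
    have hB' : Bᴴ = B := hB
    show (2:ℝ)⁻¹ • ((Complex.I • B) + (Complex.I • B)ᴴ) = 0
    rw [Matrix.conjTranspose_smul, hB']
    simp [Complex.star_def]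

lemma finrank_hermSub : Module.finrank ℝ (hermSub ι) = Fintype.card ι ^ 2 := by
  have h1 := LinearMap.finrank_range_add_finrank_ker (hermPart ι)
  rw [range_hermPart, ker_hermPart] at h1
  have h3 : Module.finrank ℝ ((hermSub ι).map (mulI ι : Matrix ι ι ℂ →ₗ[ℝ] Matrix ι ι ℂ)) = Module.finrank ℝ (hermSub ι) :=
    LinearEquiv.finrank_map_eq (mulI ι) (hermSub ι)
  rw [h3] at h1
  have h2 : Module.finrank ℝ (Matrix ι ι ℂ) = Fintype.card ι * Fintype.card ι * 2 := by
    rw [Module.finrank_matrix, Complex.finrank_real_complex]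
  rw [pow_two]; omega

end HermRank

section PerpRank
variable {ι : Type} [Fintype ι] [DecidableEq ι]

lemma trace_mul_im {A B : Matrix ι ι ℂ} (hA : A.IsHermitian) (hB : B.IsHermitian) :
    ((A * B).trace).im = 0 := by
  have h : (starRingEnd ℂ) ((A * B).trace) = (A * B).trace := by
    show star ((A * B).trace) = (A * B).trace
    rw [← Matrix.trace_conjTranspose, Matrix.conjTranspose_mul, hA.eq, hB.eq,
      Matrix.trace_mul_comm]
  exact Complex.conj_eq_iff_im.mp h

lemma inner_eq_trace_re {A B : Matrix ι ι ℂ} (hA : A.IsHermitian) :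
    (inner ℝ A B : ℝ) = ((A * B).trace).re := by
  rw [matInner_def, hA.eq]

lemma perpWithin_eq {S B : Submodule ℝ (Matrix ι ι ℂ)}
    (hS : S ≤ hermSub ι) (hB : B ≤ hermSub ι) :
    perpWithin S B = B ⊓ Sᗮ := by
  ext Z
  constructor
  · rintro ⟨hZB, hperp⟩
    rw [Submodule.mem_inf]
    refine ⟨hZB, (Submodule.mem_orthogonal _ _).mpr fun Y hY => ?_⟩
    rw [inner_eq_trace_re (hS hY), hperp Y hY]
    simp
  · intro hZ
    obtain ⟨hZB, hZO⟩ := Submodule.mem_inf.mp hZ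
    refine ⟨hZB, fun Y hY => ?_⟩
    have hre := (Submodule.mem_orthogonal _ _).mp hZO Y hY
    rw [inner_eq_trace_re (hS hY)] at hre
    have him := trace_mul_im (hS hY) (hB hZB)
    exact Complex.ext hre him

set_option maxHeartbeats 1000000 in
lemma finrank_perpWithin {S B : Submodule ℝ (Matrix ι ι ℂ)}
    (hSB : S ≤ B) (hB : B ≤ hermSub ι) :
    Module.finrank ℝ S + Module.finrank ℝ (perpWithin S B) = Module.finrank ℝ B := by
  rw [perpWithin_eq (hSB.trans hB) hB, inf_comm]
  exact Submodule.finrank_add_inf_finrank_orthogonal hSB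

lemma tl_le_herm : tlHermSub ι ≤ hermSub ι := fun _ h => h.1

lemma perpWithin_le {S B : Submodule ℝ (Matrix ι ι ℂ)} : perpWithin S B ≤ B := fun _ h => h.1

lemma idSub_le_herm : idSub ι ≤ hermSub ι := by
  rw [idSub, Submodule.span_le]
  rintro _ rfl
  show (1 : Matrix ι ι ℂ)ᴴ = 1
  simp

lemma tlHermSub_eq_perp : tlHermSub ι = perpWithin (idSub ι) (hermSub ι) := by
  ext Z
  constructor
  · rintro ⟨hherm, htr⟩
    refine ⟨hherm, fun Y hY => ?_⟩
    rw [idSub, Submodule.mem_span_singleton] at hY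
    obtain ⟨r, rfl⟩ := hY
    rw [Matrix.smul_mul, Matrix.one_mul, Matrix.trace_smul, htr, smul_zero]
  · rintro ⟨hherm, hperp⟩
    refine ⟨hherm, ?_⟩
    have := hperp 1 (Submodule.mem_span_singleton_self _)
    rwa [Matrix.one_mul] at this

lemma finrank_idSub [Nonempty ι] : Module.finrank ℝ (idSub ι) = 1 := by
  rw [idSub]
  refine finrank_span_singleton ?_
  intro h
  have := congrFun (congrFun h (Classical.arbitrary ι)) (Classical.arbitrary ι)
  simp at this

lemma finrank_tlHermSub [Nonempty ι] :
    Module.finrank ℝ (tlHermSub ι) + 1 = Fintype.card ι ^ 2 := by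
  have h := finrank_perpWithin (idSub_le_herm (ι := ι)) le_rfl
  rw [← tlHermSub_eq_perp, finrank_idSub, finrank_hermSub] at h
  omega

end PerpRank

section Kron
variable {ι κ : Type} [Fintype ι] [DecidableEq ι] [Fintype κ] [DecidableEq κ]

lemma kron_conjTranspose (A : Matrix ι ι ℂ) (B : Matrix κ κ ℂ) :
    (A ⊗ₖ B)ᴴ = Aᴴ ⊗ₖ Bᴴ := by
  ext ⟨i, k⟩ ⟨j, l⟩
  simp [Matrix.conjTranspose_apply, mul_comm]

lemma kron_isHermitian {A : Matrix ι ι ℂ} {B : Matrix κ κ ℂ}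
    (hA : A.IsHermitian) (hB : B.IsHermitian) : (A ⊗ₖ B).IsHermitian := by
  unfold Matrix.IsHermitian
  rw [kron_conjTranspose, hA.eq, hB.eq]

lemma inner_kron {X X' : Matrix ι ι ℂ} {Y Y' : Matrix κ κ ℂ}
    (hX : X.IsHermitian) (hX' : X'.IsHermitian)
    (hY : Y.IsHermitian) (hY' : Y'.IsHermitian) :
    (inner ℝ (X ⊗ₖ Y) (X' ⊗ₖ Y') : ℝ) = (inner ℝ X X' : ℝ) * (inner ℝ Y Y' : ℝ) := by
  rw [matInner_def, matInner_def, matInner_def]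
  rw [kron_conjTranspose, ← Matrix.mul_kronecker_mul, Matrix.trace_kronecker]
  rw [hX.eq, hY.eq]
  rw [Complex.mul_re, trace_mul_im hX hX', trace_mul_im hY hY']
  ring

/-- Kronecker product as an ℝ-bilinear map. -/
noncomputable def krL :
    Matrix ι ι ℂ →ₗ[ℝ] Matrix κ κ ℂ →ₗ[ℝ] Matrix (ι × κ) (ι × κ) ℂ :=
  LinearMap.mk₂ ℝ (· ⊗ₖ ·) Matrix.add_kronecker Matrix.smul_kronecker
    Matrix.kronecker_add Matrix.kronecker_smul

lemma tensorSub_le_herm {P : Submodule ℝ (Matrix ι ι ℂ)} {Q : Submodule ℝ (Matrix κ κ ℂ)}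
    (hP : P ≤ hermSub ι) (hQ : Q ≤ hermSub κ) :
    tensorSub P Q ≤ hermSub (ι × κ) := by
  rw [tensorSub, Submodule.span_le]
  rintro _ ⟨X, hX, Y, hY, rfl⟩
  exact kron_isHermitian (hP hX) (hQ hY)

lemma tensorSub_le_tl_right {P : Submodule ℝ (Matrix ι ι ℂ)} {Q : Submodule ℝ (Matrix κ κ ℂ)}
    (hP : P ≤ hermSub ι) (hQ : Q ≤ tlHermSub κ) :
    tensorSub P Q ≤ tlHermSub (ι × κ) := by
  rw [tensorSub, Submodule.span_le]
  rintro _ ⟨X, hX, Y, hY, rfl⟩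
  refine ⟨kron_isHermitian (hP hX) (hQ hY).1, ?_⟩
  rw [Matrix.trace_kronecker, (hQ hY).2, mul_zero]

lemma tensorSub_le_tl_left {P : Submodule ℝ (Matrix ι ι ℂ)} {Q : Submodule ℝ (Matrix κ κ ℂ)}
    (hP : P ≤ tlHermSub ι) (hQ : Q ≤ hermSub κ) :
    tensorSub P Q ≤ tlHermSub (ι × κ) := by
  rw [tensorSub, Submodule.span_le]
  rintro _ ⟨X, hX, Y, hY, rfl⟩
  refine ⟨kron_isHermitian (hP hX).1 (hQ hY), ?_⟩
  rw [Matrix.trace_kronecker, (hP hX).2, zero_mul]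

set_option maxHeartbeats 2000000 in
lemma finrank_sup_tensor (P P' : Submodule ℝ (Matrix ι ι ℂ)) (Q Q' : Submodule ℝ (Matrix κ κ ℂ))
    (hP : P ≤ hermSub ι) (hP' : P' ≤ hermSub ι)
    (hQ : Q ≤ hermSub κ) (hQ' : Q' ≤ hermSub κ)
    (horth : ∀ y ∈ Q, ∀ y' ∈ Q', ((y * y').trace) = 0) :
    Module.finrank ℝ ↥(tensorSub P Q ⊔ tensorSub P' Q') =
      Module.finrank ℝ P * Module.finrank ℝ Q +
        Module.finrank ℝ P' * Module.finrank ℝ Q' := by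
  classical
  let bP := stdOrthonormalBasis ℝ P
  let bP' := stdOrthonormalBasis ℝ P'
  let bQ := stdOrthonormalBasis ℝ Q
  let bQ' := stdOrthonormalBasis ℝ Q'
  let f : (Fin (Module.finrank ℝ P) × Fin (Module.finrank ℝ Q)) ⊕
      (Fin (Module.finrank ℝ P') × Fin (Module.finrank ℝ Q')) →
      Matrix (ι × κ) (ι × κ) ℂ := fun s =>
    Sum.elim (fun p => ((bP p.1 : Matrix ι ι ℂ) ⊗ₖ (bQ p.2 : Matrix κ κ ℂ)))
      (fun p => ((bP' p.1 : Matrix ι ι ℂ) ⊗ₖ (bQ' p.2 : Matrix κ κ ℂ))) s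
  have hcross : ∀ y ∈ Q, ∀ y' ∈ Q', (inner ℝ y y' : ℝ) = 0 := by
    intro y hy y' hy'
    rw [inner_eq_trace_re (hQ hy), horth y hy y' hy']
    simp
  have horthof : Orthonormal ℝ f := by
    rw [orthonormal_iff_ite]
    rintro (⟨i, j⟩ | ⟨i, j⟩) (⟨i', j'⟩ | ⟨i', j'⟩)
    · show (inner ℝ ((bP i : Matrix ι ι ℂ) ⊗ₖ (bQ j : Matrix κ κ ℂ))
        ((bP i' : Matrix ι ι ℂ) ⊗ₖ (bQ j' : Matrix κ κ ℂ)) : ℝ) = _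
      rw [inner_kron (hP (bP i).2) (hP (bP i').2) (hQ (bQ j).2) (hQ (bQ j').2)]
      rw [← Submodule.coe_inner, ← Submodule.coe_inner,
        orthonormal_iff_ite.mp bP.orthonormal, orthonormal_iff_ite.mp bQ.orthonormal]
      by_cases h1 : i = i' <;> by_cases h2 : j = j' <;>
        simp [h1, h2, Prod.ext_iff]
    · show (inner ℝ ((bP i : Matrix ι ι ℂ) ⊗ₖ (bQ j : Matrix κ κ ℂ))
        ((bP' i' : Matrix ι ι ℂ) ⊗ₖ (bQ' j' : Matrix κ κ ℂ)) : ℝ) = _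
      rw [inner_kron (hP (bP i).2) (hP' (bP' i').2) (hQ (bQ j).2) (hQ' (bQ' j').2)]
      rw [hcross _ (bQ j).2 _ (bQ' j').2, mul_zero]
      simp
    · show (inner ℝ ((bP' i : Matrix ι ι ℂ) ⊗ₖ (bQ' j : Matrix κ κ ℂ))
        ((bP i' : Matrix ι ι ℂ) ⊗ₖ (bQ j' : Matrix κ κ ℂ)) : ℝ) = _
      rw [inner_kron (hP' (bP' i).2) (hP (bP i').2) (hQ' (bQ' j).2) (hQ (bQ j').2)]
      have h0 : (inner ℝ ((bQ' j : Matrix κ κ ℂ)) ((bQ j' : Matrix κ κ ℂ)) : ℝ) = 0 := by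
        rw [real_inner_comm]
        exact hcross _ (bQ j').2 _ (bQ' j).2
      rw [h0, mul_zero]
      simp
    · show (inner ℝ ((bP' i : Matrix ι ι ℂ) ⊗ₖ (bQ' j : Matrix κ κ ℂ))
        ((bP' i' : Matrix ι ι ℂ) ⊗ₖ (bQ' j' : Matrix κ κ ℂ)) : ℝ) = _
      rw [inner_kron (hP' (bP' i).2) (hP' (bP' i').2) (hQ' (bQ' j).2) (hQ' (bQ' j').2)]
      rw [← Submodule.coe_inner, ← Submodule.coe_inner,
        orthonormal_iff_ite.mp bP'.orthonormal, orthonormal_iff_ite.mp bQ'.orthonormal]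
      by_cases h1 : i = i' <;> by_cases h2 : j = j' <;>
        simp [h1, h2, Prod.ext_iff]
  have hexpand : ∀ (R : Submodule ℝ (Matrix ι ι ℂ)) (T : Submodule ℝ (Matrix κ κ ℂ))
      (n m : ℕ) (bR : OrthonormalBasis (Fin n) ℝ R) (bT : OrthonormalBasis (Fin m) ℝ T)
      (X : Matrix ι ι ℂ) (hX : X ∈ R) (Y : Matrix κ κ ℂ) (hY : Y ∈ T)
      (W : Submodule ℝ (Matrix (ι × κ) (ι × κ) ℂ)),
      (∀ i j, ((bR i : Matrix ι ι ℂ) ⊗ₖ (bT j : Matrix κ κ ℂ)) ∈ W) → X ⊗ₖ Y ∈ W := by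
    intro R T n m bR bT X hX Y hY W hW
    have hXe : X = ∑ i, bR.repr ⟨X, hX⟩ i • (bR i : Matrix ι ι ℂ) := by
      have h1 := congrArg (Subtype.val) (bR.sum_repr ⟨X, hX⟩)
      simpa using h1.symm
    have hYe : Y = ∑ j, bT.repr ⟨Y, hY⟩ j • (bT j : Matrix κ κ ℂ) := by
      have h1 := congrArg (Subtype.val) (bT.sum_repr ⟨Y, hY⟩)
      simpa using h1.symm
    have hk : X ⊗ₖ Y = krL X Y := rfl
    rw [hk, hXe, hYe, map_sum]
    refine Submodule.sum_mem _ fun j _ => ?_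
    rw [_root_.map_smul]
    refine Submodule.smul_mem _ _ ?_
    rw [map_sum, LinearMap.coe_sum, Finset.sum_apply]
    refine Submodule.sum_mem _ fun i _ => ?_
    rw [_root_.map_smul, LinearMap.smul_apply]
    exact Submodule.smul_mem _ _ (hW i j)
  have hspan : Submodule.span ℝ (Set.range f) = tensorSub P Q ⊔ tensorSub P' Q' := by
    apply le_antisymm
    · rw [Submodule.span_le]
      rintro _ ⟨(⟨i, j⟩ | ⟨i, j⟩), rfl⟩
      · exact le_sup_left (a := tensorSub P Q)
          (Submodule.subset_span ⟨_, (bP i).2, _, (bQ j).2, rfl⟩)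
      · exact le_sup_right (b := tensorSub P' Q')
          (Submodule.subset_span ⟨_, (bP' i).2, _, (bQ' j).2, rfl⟩)
    · refine sup_le ?_ ?_
      · rw [tensorSub, Submodule.span_le]
        rintro _ ⟨X, hX, Y, hY, rfl⟩
        exact hexpand P Q _ _ bP bQ X hX Y hY _
          (fun i j => Submodule.subset_span ⟨Sum.inl (i, j), rfl⟩)
      · rw [tensorSub, Submodule.span_le]
        rintro _ ⟨X, hX, Y, hY, rfl⟩
        exact hexpand P' Q' _ _ bP' bQ' X hX Y hY _
          (fun i j => Submodule.subset_span ⟨Sum.inr (i, j), rfl⟩)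
  rw [← hspan, finrank_span_eq_card horthof.linearIndependent]
  simp

end Kron

section DeltaRank

lemma Delta_le_tl : ∀ z : QT, Delta z ≤ tlHermSub (Idx z)
  | .elem n => le_rfl
  | .arrow x y => by
    rw [Delta]
    refine sup_le ?_ ?_
    · exact tensorSub_le_tl_right le_rfl (Delta_le_tl y)
    · exact tensorSub_le_tl_left perpWithin_le perpWithin_le

set_option maxHeartbeats 2000000 in
lemma finrank_Delta_arrow (x y : QT) :
    Module.finrank ℝ (Delta (QT.arrow x y)) =
      Fintype.card (Idx x) ^ 2 * Module.finrank ℝ (Delta y) +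
        (Module.finrank ℝ (tlHermSub (Idx x)) - Module.finrank ℝ (Delta x)) *
          (Fintype.card (Idx y) ^ 2 - Module.finrank ℝ (Delta y)) := by
  have hDy : Delta y ≤ hermSub (Idx y) := (Delta_le_tl y).trans tl_le_herm
  have e1 := finrank_perpWithin (Delta_le_tl x) tl_le_herm
  have e2 := finrank_perpWithin hDy le_rfl
  rw [finrank_hermSub] at e2
  have hpx : Module.finrank ℝ (perpWithin (Delta x) (tlHermSub (Idx x))) =
      Module.finrank ℝ (tlHermSub (Idx x)) - Module.finrank ℝ (Delta x) := by omega
  have hpy : Module.finrank ℝ (perpWithin (Delta y) (hermSub (Idx y))) =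
      Fintype.card (Idx y) ^ 2 - Module.finrank ℝ (Delta y) := by omega
  have hst := finrank_sup_tensor (hermSub (Idx x)) (perpWithin (Delta x) (tlHermSub (Idx x)))
    (Delta y) (perpWithin (Delta y) (hermSub (Idx y)))
    le_rfl (perpWithin_le.trans tl_le_herm) hDy perpWithin_le (fun u hu v hv => hv.2 u hu)
  rw [finrank_hermSub, hpx, hpy] at hst
  exact hst

lemma card_idx_elem (n : ℕ) : Fintype.card (Idx (QT.elem n)) = n :=
  (Fintype.card_congr (Equiv.cast (rfl : Idx (QT.elem n) = Fin n))).trans (Fintype.card_fin n)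

lemma card_idx_arrow (x y : QT) :
    Fintype.card (Idx (QT.arrow x y)) = Fintype.card (Idx x) * Fintype.card (Idx y) := by
  exact (Fintype.card_congr (Equiv.cast (rfl : Idx (QT.arrow x y) = (Idx x × Idx y)))).trans
    (Fintype.card_prod _ _)

lemma key (z : QT) :
    (Fintype.card (Idx z) = 1 → Module.finrank ℝ (Delta z) = 0) ∧
    (Fintype.card (Idx z) = 2 →
      (Module.finrank ℝ (Delta z) = 0 ∨ Module.finrank ℝ (Delta z) = 3)) ∧
    (Fintype.card (Idx z) = 4 →
      (Module.finrank ℝ (Delta z) = 0 ∨ Module.finrank ℝ (Delta z) = 3 ∨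
        Module.finrank ℝ (Delta z) = 12 ∨ Module.finrank ℝ (Delta z) = 15)) := by
  induction z with
  | elem n =>
    have hc := card_idx_elem n
    have hD : Module.finrank ℝ (Delta (QT.elem n)) = Module.finrank ℝ (tlHermSub (Fin n)) := rfl
    refine ⟨fun h => ?_, fun h => ?_, fun h => ?_⟩
    all_goals
      rw [hc] at h
      haveI : Nonempty (Fin n) := ⟨⟨0, by omega⟩⟩
      have ht := finrank_tlHermSub (ι := Fin n)
      rw [Fintype.card_fin, sq] at ht
      rw [hD]
      subst h
      omega
  | arrow x y ihx ihy =>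
    obtain ⟨ihx1, ihx2, ihx4⟩ := ihx
    obtain ⟨ihy1, ihy2, ihy4⟩ := ihy
    have hc := card_idx_arrow x y
    refine ⟨fun h => ?_, fun h => ?_, fun h => ?_⟩
    all_goals
      rw [hc] at h
      obtain ⟨dx, hdxe⟩ : ∃ n, Fintype.card (Idx x) = n := ⟨_, rfl⟩
      obtain ⟨dy, hdye⟩ : ∃ n, Fintype.card (Idx y) = n := ⟨_, rfl⟩
      rw [hdxe, hdye] at h
      have hx0 : dx ≠ 0 := by rintro rfl; simp at h
      have hy0 : dy ≠ 0 := by rintro rfl; simp at h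
      haveI : Nonempty (Idx x) := Fintype.card_pos_iff.mp (by rw [hdxe]; omega)
      haveI : Nonempty (Idx y) := Fintype.card_pos_iff.mp (by rw [hdye]; omega)
      have etx := finrank_tlHermSub (ι := Idx x)
      rw [hdxe] at etx
      have haxb : Module.finrank ℝ (Delta x) ≤ Module.finrank ℝ (tlHermSub (Idx x)) :=
        Submodule.finrank_mono (Delta_le_tl x)
      have hf := finrank_Delta_arrow x y
      rw [hdxe, hdye] at hf
      rw [pow_two] at etx
      rw [pow_two, pow_two] at hf
      have hdxle : dx ≤ 4 := Nat.le_of_dvd (by norm_num) ⟨dy, h.symm⟩ |>.trans (by omega)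
      have hdx1 : 1 ≤ dx := by omega
      interval_cases dx
      · -- dx = 1
        have hax0 := ihx1 hdxe
        have hay : dy = 1 ∨ dy = 2 ∨ dy = 4 := by omega
        rcases hay with rfl | rfl | rfl
        · have h2 := ihy1 hdye
          rw [hax0, h2] at hf
          omega
        · have h2 := ihy2 hdye
          rw [hax0] at hf
          rcases h2 with h2 | h2 <;> rw [h2] at hf <;> omega
        · have h2 := ihy4 hdye
          rw [hax0] at hf
          rcases h2 with h2 | h2 | h2 | h2 <;> rw [h2] at hf <;> omega
      · -- dx = 2
        have hax := ihx2 hdxe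
        have hdy : dy = 1 ∨ dy = 2 := by omega
        rcases hdy with rfl | rfl
        · have hay := ihy1 hdye
          rw [hay] at hf
          rcases hax with h1 | h1 <;> rw [h1] at hf <;> omega
        · have hay := ihy2 hdye
          rcases hax with h1 | h1 <;> rcases hay with h2 | h2 <;> rw [h1, h2] at hf <;>
            norm_num at etx hf <;> omega
      · -- dx = 3
        omega
      · -- dx = 4
        have hdy : dy = 1 := by omega
        subst hdy
        have hax := ihx4 hdxe
        have hay := ihy1 hdye
        rw [hay] at hf
        rcases hax with h1 | h1 | h1 | h1 <;> rw [h1] at hf <;> omega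

end DeltaRank

/-- The inverse characterization problem for `H = ℂ² ⊗ ℂ²` and
`Δ = Traceless(ℂ²) ⊗ Traceless(ℂ²)` (which has real dimension `9`) has no
solution: there is no type `z` with `dim H_z = 4` and `dim Δ_z = 9`.
In particular, the dimension equation `9 = d_y²(d_x² − 1 − a_x) + a_y(1 + a_x)`
has no solution with `(d_x, d_y) = (2, 2)` and `0 ≤ a_x, a_y ≤ 3`, and the
corresponding equation `6 = 4(3 − a_f) + a_g(1 + a_f)` arising in the case
`(d_x, d_y) = (4, 1)` has no solution with `0 ≤ a_f, a_g ≤ 3`. -/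
theorem inverse_characterization_no_go :
    (¬ ∃ z : QT, Fintype.card (Idx z) = 4 ∧ Module.finrank ℝ (Delta z) = 9) ∧
    (¬ ∃ ax ay : ℕ, ax ≤ 3 ∧ ay ≤ 3 ∧ 9 = 4 * (4 - 1 - ax) + ay * (1 + ax)) ∧
    (¬ ∃ af ag : ℕ, af ≤ 3 ∧ ag ≤ 3 ∧ 6 = 4 * (4 - 1 - af) + ag * (1 + af)) := by
  refine ⟨?_, ?_, ?_⟩
  · rintro ⟨z, hc, hd⟩
    have hk := (key z).2.2 hc
    omega
  · rintro ⟨ax, ay, h1, h2, h3⟩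
    interval_cases ax <;> omega
  · rintro ⟨af, ag, h1, h2, h3⟩
    interval_cases af <;> omega
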